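/- arXiv:1802.02194 — 6 statements merged into one kernel-verified Lean document; each statement's English description precedes it below -/
import Mathlib

section
/- If G is a finite soluble group, then the length of G equals Ω(|G|), the number of prime divisors of |G| counted with multiplicity. -/
/-- An unrefinable chain of length `t` for a group `G`: an ascending chain of
subgroups from `⊥` to `⊤` in which each term is maximal in the next
(equivalently, `G = G₀ > G₁ > ⋯ > G_t = 1` with each `Gᵢ` maximal in `Gᵢ₋₁`). -/
def IsUnrefinableChain {G : Type*} [Group G] {t : ℕ} (s : Fin (t + 1) → Subgroup G) : Prop :=
  s 0 = ⊥ ∧ s (Fin.last t) = ⊤ ∧ ∀ i : Fin t, s i.castSucc ⋖ s i.succ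

/-- The length `l(G)`: the maximal length of an unrefinable chain. -/
noncomputable def groupLength (G : Type*) [Group G] : ℕ :=
  sSup {t | ∃ s : Fin (t + 1) → Subgroup G, IsUnrefinableChain s}

/-- The depth `λ(G)`: the minimal length of an unrefinable chain. -/
noncomputable def groupDepth (G : Type*) [Group G] : ℕ :=
  sInf {t | ∃ s : Fin (t + 1) → Subgroup G, IsUnrefinableChain s}

/-- The chain difference `cd(G) = l(G) - λ(G)`. -/
noncomputable def chainDiff (G : Type*) [Group G] : ℕ := groupLength G - groupDepth G

/-- A chief series of length `t` for `G`. -/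
def IsChiefSeries {G : Type*} [Group G] {t : ℕ} (s : Fin (t + 1) → Subgroup G) : Prop :=
  s 0 = ⊥ ∧ s (Fin.last t) = ⊤ ∧ (∀ i, (s i).Normal) ∧
    ∀ i : Fin t, s i.castSucc < s i.succ ∧
      ∀ N : Subgroup G, N.Normal → s i.castSucc < N → N < s i.succ → False

/-- The chief length of `G`: the number of factors in a chief series. -/
noncomputable def chiefLength (G : Type*) [Group G] : ℕ :=
  sSup {t | ∃ s : Fin (t + 1) → Subgroup G, IsChiefSeries s}


lemma omega_mul {a b : ℕ} (ha : a ≠ 0) (hb : b ≠ 0) :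
    (a * b).primeFactorsList.length = a.primeFactorsList.length + b.primeFactorsList.length := by
  simpa using (Nat.perm_primeFactorsList_mul ha hb).length_eq

lemma omega_lt_omega {a b : ℕ} (ha : a ≠ 0) (hdvd : a ∣ b) (hlt : a < b) :
    a.primeFactorsList.length < b.primeFactorsList.length := by
  obtain ⟨c, rfl⟩ := hdvd
  have hc : c ≠ 0 := by rintro rfl; simp at hlt
  have hc1 : c ≠ 1 := by rintro rfl; simp at hlt
  rw [omega_mul ha hc]
  have : c.primeFactorsList ≠ [] := by
    rw [Ne, Nat.primeFactorsList_eq_nil]; tauto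
  have := List.length_pos_iff.2 this
  omega

lemma covby_top_of_index_prime {G : Type*} [Group G] {H : Subgroup G} (hp : H.index.Prime) :
    H ⋖ ⊤ := by
  constructor
  · exact lt_top_iff_ne_top.2 fun h => hp.ne_one (by simp [h, Subgroup.index_eq_one])
  · intro K hHK hK
    have hle : H ≤ K := hHK.le
    have hmul := Subgroup.relIndex_mul_index hle
    have hKdvd : K.index ∣ H.index := Dvd.intro_left _ hmul
    rcases (Nat.Prime.eq_one_or_self_of_dvd hp _ hKdvd) with h1 | h1
    · exact (lt_top_iff_ne_top.1 hK) (Subgroup.index_eq_one.1 h1)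
    · have h2 : H.relIndex K = 1 := by
        rw [h1] at hmul
        have hpne : H.index ≠ 0 := hp.ne_zero
        have := Nat.eq_of_mul_eq_mul_right (Nat.pos_of_ne_zero hpne)
          (hmul.trans (one_mul H.index).symm)
        exact this
      exact absurd (Subgroup.relIndex_eq_one.1 h2) (not_le_of_gt hHK)

lemma map_subtype_covby {G : Type*} [Group G] {H : Subgroup G} {K L : Subgroup H}
    (h : K ⋖ L) : K.map H.subtype ⋖ L.map H.subtype := by
  constructor
  · exact lt_iff_le_not_ge.2 ⟨Subgroup.map_subtype_le_map_subtype.2 h.1.le,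
      fun hc => h.1.not_ge (Subgroup.map_subtype_le_map_subtype.1 hc)⟩
  · intro X h1 h2
    have hXH : X ≤ H := h2.le.trans (Subgroup.map_subtype_le _)
    have hX : (X.subgroupOf H).map H.subtype = X := by
      rw [Subgroup.subgroupOf_map_subtype, inf_eq_left.2 hXH]
    rw [← hX] at h1 h2
    exact h.2 (lt_iff_le_not_ge.2 ⟨Subgroup.map_subtype_le_map_subtype.1 h1.le,
        fun hc => h1.not_ge (Subgroup.map_subtype_le_map_subtype.2 hc)⟩)
      (lt_iff_le_not_ge.2 ⟨Subgroup.map_subtype_le_map_subtype.1 h2.le,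
        fun hc => h2.not_ge (Subgroup.map_subtype_le_map_subtype.2 hc)⟩)

lemma quot_nontrivial {G : Type*} [Group G] {N : Subgroup G} [N.Normal] (h : N ≠ ⊤) :
    Nontrivial (G ⧸ N) := by
  obtain ⟨x, hx⟩ : ∃ x, x ∉ N := by
    by_contra hc; push_neg at hc
    exact h (by ext y; simp [hc y])
  exact ⟨⟨x, 1, by simpa [QuotientGroup.eq_one_iff] using hx⟩⟩

-- finite nontrivial comm group has subgroup of prime index
lemma exists_index_prime_of_comm (Q : Type*) [CommGroup Q] [Finite Q] [Nontrivial Q] :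
    ∃ M : Subgroup Q, M.index.Prime := by
  haveI : Finite (Subgroup Q) := Finite.of_injective _ SetLike.coe_injective
  obtain ⟨M, hM, -⟩ := (eq_top_or_exists_le_coatom (⊥ : Subgroup Q)).resolve_left
    (by simpa using (Subgroup.bot_ne_top (G := Q)).symm ∘ Eq.symm)
  refine ⟨M, ?_⟩
  haveI : Nontrivial (Q ⧸ M) := quot_nontrivial hM.1
  have hcard : Nat.card (Q ⧸ M) ≠ 1 := by
    intro h
    rw [Nat.card_eq_one_iff_unique] at h
    obtain ⟨hs, -⟩ := h
    obtain ⟨a, b, hab⟩ := exists_pair_ne (Q ⧸ M)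
    exact hab (hs.elim a b)
  obtain ⟨p, hp, hpd⟩ := Nat.exists_prime_and_dvd hcard
  haveI : Fact p.Prime := ⟨hp⟩
  obtain ⟨g, hg⟩ := exists_prime_orderOf_dvd_card' p hpd
  set P : Subgroup (Q ⧸ M) := Subgroup.zpowers g with hP
  have hcardP : Nat.card P = p := by rw [Nat.card_zpowers, hg]
  have hPtop : P = ⊤ := by
    by_contra hPt
    have hMX : M ≤ P.comap (QuotientGroup.mk' M) := by
      intro x hx
      simp only [Subgroup.mem_comap]
      have : (QuotientGroup.mk' M) x = 1 := by
        simpa [QuotientGroup.eq_one_iff] using hx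
      rw [this]; exact one_mem _
    have hmapX : (P.comap (QuotientGroup.mk' M)).map (QuotientGroup.mk' M) = P :=
      Subgroup.map_comap_eq_self_of_surjective (QuotientGroup.mk'_surjective M) P
    have hXne : P.comap (QuotientGroup.mk' M) ≠ M := by
      intro hXM
      have hb : (P.comap (QuotientGroup.mk' M)).map (QuotientGroup.mk' M) = ⊥ := by
        rw [hXM, eq_bot_iff]
        rintro y ⟨x, hx, rfl⟩
        simpa [QuotientGroup.eq_one_iff] using hx
      rw [hmapX] at hb
      have : Nat.card P = 1 := by rw [hb]; simp
      rw [hcardP] at this; exact hp.ne_one this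
    have hXtop : P.comap (QuotientGroup.mk' M) ≠ ⊤ := by
      intro hXM
      apply hPt
      rw [← hmapX, hXM]
      simpa using Subgroup.map_top_of_surjective _ (QuotientGroup.mk'_surjective M)
    exact hXtop (hM.2 _ (lt_of_le_of_ne hMX (Ne.symm hXne)))
  have : M.index = Nat.card (Q ⧸ M) := rfl
  rw [this, ← Subgroup.card_top (G := Q ⧸ M), ← hPtop, hcardP]
  exact hp

lemma commutator_ne_top_of_solvable (G : Type*) [Group G] [Nontrivial G] [Group.IsSolvable G] :
    commutator G ≠ ⊤ := by
  intro h
  have hd : ∀ n, derivedSeries G n = ⊤ := by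
    intro n; induction n with
    | zero => rfl
    | succ n ih => rw [derivedSeries_succ, ih, ← commutator_def, h]
  obtain ⟨n, hn⟩ := Group.IsSolvable.solvable (G := G)
  rw [hd n] at hn
  obtain ⟨x, y, hxy⟩ := exists_pair_ne G
  have hx : x * y⁻¹ ∈ (⊤ : Subgroup G) := trivial
  rw [hn] at hx
  simp only [Subgroup.mem_bot, mul_inv_eq_one] at hx
  exact hxy hx

lemma exists_index_prime (G : Type*) [Group G] [Finite G] [Group.IsSolvable G] [Nontrivial G] :
    ∃ H : Subgroup G, H.index.Prime := by
  haveI : Nontrivial (Abelianization G) :=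
    quot_nontrivial (N := commutator G) (commutator_ne_top_of_solvable G)
  obtain ⟨M, hM⟩ := exists_index_prime_of_comm (Abelianization G)
  refine ⟨M.comap (Abelianization.of : G →* Abelianization G), ?_⟩
  rwa [Subgroup.index_comap_of_surjective _ (by rintro ⟨a⟩; exact ⟨a, rfl⟩)]

lemma chain_le {G : Type*} [Group G] [Finite G] {t : ℕ} {s : Fin (t + 1) → Subgroup G}
    (h : IsUnrefinableChain s) : t ≤ (Nat.card G).primeFactorsList.length := by
  obtain ⟨h0, hl, hc⟩ := h
  have key : ∀ j : ℕ, ∀ hj : j < t + 1, j ≤ (Nat.card (s ⟨j, hj⟩)).primeFactorsList.length := by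
    intro j
    induction j with
    | zero => intro hj; exact Nat.zero_le _
    | succ j ihj =>
      intro hj
      have hj' : j < t + 1 := by omega
      have hjt : j < t := by omega
      have hcov := hc ⟨j, hjt⟩
      have hlt : s ⟨j, hj'⟩ < s ⟨j + 1, hj⟩ := hcov.1
      have hdvd := Subgroup.card_dvd_of_le hlt.le
      have hpos : Nat.card (s ⟨j, hj'⟩) ≠ 0 := Nat.card_pos.ne'
      have hcardlt : Nat.card (s ⟨j, hj'⟩) < Nat.card (s ⟨j + 1, hj⟩) := by
        rcases lt_or_eq_of_le (Nat.le_of_dvd Nat.card_pos hdvd) with h' | h'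
        · exact h'
        · exact absurd (Subgroup.eq_of_le_of_card_ge hlt.le h'.ge) hlt.ne
      have := omega_lt_omega hpos hdvd hcardlt
      have := ihj hj'
      omega
  have hkey := key t (by omega)
  have hfin : (⟨t, by omega⟩ : Fin (t + 1)) = Fin.last t := rfl
  rw [hfin, hl] at hkey
  rwa [Subgroup.card_top] at hkey

universe u

lemma exists_chain (n : ℕ) : ∀ (G : Type u) [Group G] [Finite G] [Group.IsSolvable G],
    Nat.card G = n →
    ∃ s : Fin (n.primeFactorsList.length + 1) → Subgroup G, IsUnrefinableChain s := by
  induction n using Nat.strong_induction_on with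
  | _ n ih =>
    intro G _ _ _ hn
    rcases subsingleton_or_nontrivial G with hsub | hnt
    · have h1 : n = 1 := by
        rw [← hn, Nat.card_eq_one_iff_unique]
        exact ⟨inferInstance, inferInstance⟩
      subst h1
      have hbt : (⊥ : Subgroup G) = ⊤ := by
        ext x; simp [Subsingleton.elim x 1]
      refine ⟨fun _ => ⊥, rfl, by rw [hbt], ?_⟩
      intro i
      have := i.2
      simp [Nat.primeFactorsList_one] at this
    · obtain ⟨H, hp⟩ := exists_index_prime G
      have hmul : Nat.card H * H.index = Nat.card G := H.card_mul_index
      have hm0 : Nat.card H ≠ 0 := Nat.card_pos.ne'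
      have hlt : Nat.card H < n := by
        rw [← hn, ← hmul]
        nlinarith [hp.two_le, Nat.pos_of_ne_zero hm0]
      obtain ⟨s, hs0, hsl, hsc⟩ := ih (Nat.card H) hlt H rfl
      have hΩ : n.primeFactorsList.length = (Nat.card H).primeFactorsList.length + 1 := by
        rw [← hn, ← hmul, omega_mul hm0 hp.ne_zero, Nat.primeFactorsList_prime hp]
        simp
      rw [hΩ]
      refine ⟨Fin.snoc (fun i => (s i).map H.subtype) ⊤, ?_, ?_, ?_⟩
      · have h0 : (0 : Fin ((Nat.card H).primeFactorsList.length + 1 + 1)) =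
          Fin.castSucc 0 := rfl
        rw [h0, Fin.snoc_castSucc, hs0, Subgroup.map_bot]
      · rw [Fin.snoc_last]
      · intro i
        refine Fin.lastCases ?_ ?_ i
        · rw [Fin.succ_last, Fin.snoc_last, Fin.snoc_castSucc, hsl,
            ← MonoidHom.range_eq_map, Subgroup.range_subtype]
          exact covby_top_of_index_prime hp
        · intro j
          rw [Fin.succ_castSucc, Fin.snoc_castSucc, Fin.snoc_castSucc]
          exact map_subtype_covby (hsc j)

/-- a finite soluble group has length `Ω(|G|)`. -/
theorem length_eq_card_factors_of_solvable (G : Type*) [Group G] [Finite G] [Group.IsSolvable G] :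
    groupLength G = (Nat.card G).primeFactorsList.length := by
  have hub : ∀ t ∈ {t | ∃ s : Fin (t + 1) → Subgroup G, IsUnrefinableChain s},
      t ≤ (Nat.card G).primeFactorsList.length := by
    rintro t ⟨s, hs⟩
    exact chain_le hs
  have hmem : (Nat.card G).primeFactorsList.length ∈
      {t | ∃ s : Fin (t + 1) → Subgroup G, IsUnrefinableChain s} :=
    exists_chain (Nat.card G) G rfl
  exact le_antisymm (csSup_le ⟨_, hmem⟩ hub) (le_csSup ⟨_, hub⟩ hmem)
end

section
/- If G is a finite group and N is a normal subgroup of G, then the depth of G/N is at most the depth of G, and the depth of G is at most the depth of N plus the depth of G/N. -/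
section ChainHelpers
open Subgroup

variable {G H : Type*} [Group G] [Group H]

lemma mapSubtypeCovBy (N : Subgroup G) {A B : Subgroup N} (h : A ⋖ B) :
    A.map N.subtype ⋖ B.map N.subtype := by
  have hinj : Function.Injective N.subtype := N.subtype_injective
  constructor
  · exact lt_of_le_of_ne (map_mono h.1.le) fun e => h.1.ne (map_injective hinj e)
  · intro C hAC hCB
    have hCN : C ≤ N := hCB.le.trans (by simpa [N.range_subtype] using map_le_range N.subtype B)
    have hC : (C.comap N.subtype).map N.subtype = C := by
      rw [map_comap_eq, N.range_subtype, inf_eq_right.2 hCN]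
    have h1 : A < C.comap N.subtype := by
      refine lt_of_le_of_ne ?_ fun e => hAC.ne ?_
      · rw [← comap_map_eq_self_of_injective hinj A]; exact comap_mono hAC.le
      · rw [e, hC]
    have h2 : C.comap N.subtype < B := by
      refine lt_of_le_of_ne ?_ fun e => hCB.ne ?_
      · rw [← comap_map_eq_self_of_injective hinj B]; exact comap_mono hCB.le
      · rw [← e, hC]
    exact h.2 h1 h2

lemma comapCovBy (f : G →* H) (hf : Function.Surjective f) {A B : Subgroup H} (h : A ⋖ B) :
    A.comap f ⋖ B.comap f := by
  constructor
  · exact lt_of_le_of_ne (comap_mono h.1.le) fun e => h.1.ne (comap_injective hf e)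
  · intro C hAC hCB
    have hker : f.ker ≤ C :=
      le_trans (fun x hx => show f x ∈ A by rw [MonoidHom.mem_ker.mp hx]; exact A.one_mem) hAC.le
    have hC : (C.map f).comap f = C := by rw [comap_map_eq, sup_of_le_left hker]
    have h1 : A < C.map f := by
      refine lt_of_le_of_ne ?_ fun e => hAC.ne ?_
      · rw [← map_comap_eq_self_of_surjective hf A]; exact map_mono hAC.le
      · rw [e, hC]
    have h2 : C.map f < B := by
      refine lt_of_le_of_ne ?_ fun e => hCB.ne ?_
      · rw [← map_comap_eq_self_of_surjective hf B]; exact map_mono hCB.le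
      · rw [← e, hC]
    exact h.2 h1 h2

lemma mapCovByOrEq (f : G →* H) {A B : Subgroup G} (h : A ⋖ B) :
    A.map f = B.map f ∨ A.map f ⋖ B.map f := by
  by_cases he : A.map f = B.map f
  · exact Or.inl he
  refine Or.inr ⟨lt_of_le_of_ne (map_mono h.1.le) he, ?_⟩
  intro C hAC hCB
  set D := C.comap f ⊓ B with hD
  have hAD : A ≤ D := le_inf (le_trans (le_comap_map f A) (comap_mono hAC.le)) h.1.le
  have hmapD : D.map f = C := by
    apply le_antisymm
    · exact le_trans (map_mono inf_le_left) (by rw [map_comap_eq]; exact inf_le_right)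
    · intro c hc
      obtain ⟨b, hb, rfl⟩ := hCB.le hc
      exact ⟨b, ⟨hc, hb⟩, rfl⟩
  rcases h.eq_or_eq hAD inf_le_right with hDA | hDB
  · exact hAC.ne' (by rw [← hmapD, hDA])
  · exact hCB.ne (by rw [← hmapD, hDB])

end ChainHelpers


/-- Remove duplicate steps from a weak chain. -/
lemma shrinkChain {α : Type*} [PartialOrder α] :
    ∀ (t : ℕ) (s : Fin (t + 1) → α),
      (∀ i : Fin t, s i.castSucc = s i.succ ∨ s i.castSucc ⋖ s i.succ) →
      ∃ t' ≤ t, ∃ s' : Fin (t' + 1) → α, s' 0 = s 0 ∧ s' (Fin.last t') = s (Fin.last t) ∧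
        ∀ i : Fin t', s' i.castSucc ⋖ s' i.succ := by
  intro t
  induction t with
  | zero => exact fun s _ => ⟨0, le_refl 0, s, rfl, rfl, fun i => i.elim0⟩
  | succ t ih =>
    intro s hs
    obtain ⟨t', ht', s', h0, hlast, hcov⟩ := ih (s ∘ Fin.castSucc) (fun i => by
      have := hs i.castSucc
      simpa only [Function.comp_apply, Fin.succ_castSucc] using this)
    simp only [Function.comp_apply] at h0 hlast
    rcases hs (Fin.last t) with heq | hcov2
    · refine ⟨t', ht'.trans (Nat.le_succ t), s', by simpa using h0, ?_, hcov⟩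
      rw [hlast]
      simpa [Fin.succ_last] using heq
    · refine ⟨t' + 1, Nat.succ_le_succ ht', Fin.snoc s' (s (Fin.last (t + 1))), ?_, ?_, ?_⟩
      · rw [← Fin.castSucc_zero, Fin.snoc_castSucc]
        simpa using h0
      · simp
      · intro i
        induction i using Fin.lastCases with
        | last =>
          rw [Fin.succ_last, Fin.snoc_castSucc, Fin.snoc_last, hlast]
          have := hcov2
          rwa [show (Fin.last t).succ = Fin.last (t + 1) from Fin.succ_last t] at this
        | cast j =>
          rw [Fin.succ_castSucc, Fin.snoc_castSucc, Fin.snoc_castSucc]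
          exact hcov j


lemma existsChainTo {G : Type*} [Group G] [Finite G] (H : Subgroup G) :
    ∃ t, ∃ s : Fin (t + 1) → Subgroup G, s 0 = ⊥ ∧ s (Fin.last t) = H ∧
      ∀ i : Fin t, s i.castSucc ⋖ s i.succ := by
  induction H using WellFoundedLT.induction with
  | ind H ih =>
    rcases eq_or_ne H ⊥ with rfl | hne
    · exact ⟨0, fun _ => ⊥, rfl, rfl, fun i => i.elim0⟩
    · -- find K ⋖ H
      have hlt : (⊥ : Subgroup G) < H := bot_lt_iff_ne_bot.mpr hne
      obtain ⟨K, hK, hKmax⟩ := Set.Finite.exists_maximalFor id {K : Subgroup G | K < H}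
        (Set.toFinite _) ⟨⊥, hlt⟩
      have hcov : K ⋖ H := by
        refine ⟨hK, fun C hKC hCH => ?_⟩
        have := hKmax (j := C) hCH (le_of_lt hKC); simp only [id] at this; exact absurd this (not_le_of_gt hKC)
      obtain ⟨t, s, h0, hlast, hc⟩ := ih K hK
      refine ⟨t + 1, Fin.snoc s H, ?_, by simp, ?_⟩
      · rw [← Fin.castSucc_zero, Fin.snoc_castSucc]; exact h0
      · intro i
        induction i using Fin.lastCases with
        | last => rw [Fin.succ_last, Fin.snoc_castSucc, Fin.snoc_last, hlast]; exact hcov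
        | cast j => rw [Fin.succ_castSucc, Fin.snoc_castSucc, Fin.snoc_castSucc]; exact hc j


lemma concatChain {α : Type*} [PartialOrder α] {a b : ℕ}
    (s1 : Fin (a + 1) → α) (s2 : Fin (b + 1) → α)
    (hjoin : s1 (Fin.last a) = s2 0)
    (h1 : ∀ i : Fin a, s1 i.castSucc ⋖ s1 i.succ)
    (h2 : ∀ i : Fin b, s2 i.castSucc ⋖ s2 i.succ) :
    ∃ s : Fin (a + b + 1) → α, s 0 = s1 0 ∧ s (Fin.last (a + b)) = s2 (Fin.last b) ∧
      ∀ i : Fin (a + b), s i.castSucc ⋖ s i.succ := by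
  refine ⟨fun i => if h : (i : ℕ) < a then s1 ⟨i, by omega⟩
    else s2 ⟨(i : ℕ) - a, by have := i.isLt; omega⟩, ?_, ?_, ?_⟩
  · by_cases ha : 0 < a
    · simp only [Fin.val_zero]
      simp only [ha, ↓reduceDIte]
      exact congrArg s1 (by ext; simp)
    · have ha0 : a = 0 := by omega
      simp only [Fin.val_zero]
      simp only [ha, ↓reduceDIte]
      subst ha0
      refine (congrArg s2 (by ext; simp) : _ = s2 0).trans ?_
      exact hjoin.symm.trans (congrArg s1 (by ext; simp))
  · simp only [Fin.val_last]
    rw [dif_neg (by omega)]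
    exact congrArg s2 (by ext; simp)
  · intro i
    have hi := i.isLt
    simp only [Fin.coe_castSucc, Fin.val_succ]
    by_cases hlt : (i : ℕ) + 1 < a
    · rw [dif_pos (by omega), dif_pos hlt]
      exact h1 ⟨i, by omega⟩
    · by_cases heq : (i : ℕ) + 1 = a
      · rw [dif_pos (by omega), dif_neg (by omega)]
        have : s2 ⟨(i : ℕ) + 1 - a, by omega⟩ = s1 ⟨(i : ℕ) + 1, by omega⟩ := by
          refine (congrArg s2 (by ext; simp; omega) : _ = s2 0).trans ?_
          exact hjoin.symm.trans (congrArg s1 (by ext; simp; omega))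
        rw [this]
        exact h1 ⟨i, by omega⟩
      · rw [dif_neg (by omega), dif_neg (by omega)]
        have : ((i : ℕ) + 1 - a) = ((i : ℕ) - a) + 1 := by omega
        simp_rw [this]
        exact h2 ⟨(i : ℕ) - a, by omega⟩

/-- `λ(G/N) ≤ λ(G) ≤ λ(N) + λ(G/N)`. -/
theorem depth_quotient_le_and_depth_le (G : Type*) [Group G] [Finite G]
    (N : Subgroup G) [N.Normal] :
    groupDepth (G ⧸ N) ≤ groupDepth G ∧
      groupDepth G ≤ groupDepth N + groupDepth (G ⧸ N) := by
  unfold groupDepth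
  have hST : {t | ∃ s : Fin (t + 1) → Subgroup G, IsUnrefinableChain s}.Nonempty := by
    obtain ⟨t, s, h0, hl, hc⟩ := existsChainTo (⊤ : Subgroup G)
    exact ⟨t, s, h0, hl, hc⟩
  constructor
  · have hmem := Nat.sInf_mem hST
    obtain ⟨s, hs⟩ := hmem
    obtain ⟨h0, hl, hc⟩ := hs
    obtain ⟨t', ht', s', h0', hl', hc'⟩ := shrinkChain _
      (fun i => (s i).map (QuotientGroup.mk' N))
      (fun i => mapCovByOrEq _ (hc i))
    refine le_trans (Nat.sInf_le ⟨s', ?_, ?_, hc'⟩) ht'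
    · rw [h0', h0, Subgroup.map_bot]
    · rw [hl', hl, Subgroup.map_top_of_surjective _ (QuotientGroup.mk'_surjective N)]
  · have hN : {t | ∃ s : Fin (t + 1) → Subgroup N, IsUnrefinableChain s}.Nonempty := by
      obtain ⟨t, s, h0, hl, hc⟩ := existsChainTo (⊤ : Subgroup N)
      exact ⟨t, s, h0, hl, hc⟩
    have hQ : {t | ∃ s : Fin (t + 1) → Subgroup (G ⧸ N), IsUnrefinableChain s}.Nonempty := by
      obtain ⟨t, s, h0, hl, hc⟩ := existsChainTo (⊤ : Subgroup (G ⧸ N))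
      exact ⟨t, s, h0, hl, hc⟩
    obtain ⟨s1, hs1⟩ := Nat.sInf_mem hN
    obtain ⟨h10, h1l, h1c⟩ := hs1
    obtain ⟨s2, hs2⟩ := Nat.sInf_mem hQ
    obtain ⟨h20, h2l, h2c⟩ := hs2
    obtain ⟨s, h0, hl, hc⟩ := concatChain
      (fun i => (s1 i).map N.subtype)
      (fun i => (s2 i).comap (QuotientGroup.mk' N))
      (by beta_reduce; rw [h1l, ← MonoidHom.range_eq_map, N.range_subtype, h20, MonoidHom.comap_bot,
            QuotientGroup.ker_mk'])
      (fun i => mapSubtypeCovBy N (h1c i))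
      (fun i => comapCovBy _ (QuotientGroup.mk'_surjective N) (h2c i))
    exact Nat.sInf_le ⟨s, by rw [h0, h10, Subgroup.map_bot],
      by rw [hl, h2l, Subgroup.comap_top], hc⟩
end

section
/- If G is a finite group and N is a normal subgroup of G of prime order, then the depth of G equals the depth of G/N plus 1. -/
section AuxDepth

open Subgroup

variable {G : Type*} [Group G]

/-- Dedekind modular law with a normal subgroup. -/
private lemma aux_modular (N H B : Subgroup G) [N.Normal] (hNH : N ≤ H) :
    (H ⊓ B) ⊔ N = H ⊓ (B ⊔ N) := by
  apply SetLike.coe_injective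
  have h1 : (H ⊓ B) ⊔ N = N ⊔ (B ⊓ H) := by rw [sup_comm, inf_comm]
  have h2 : B ⊔ N = N ⊔ B := sup_comm _ _
  rw [h1, Subgroup.normal_mul, Subgroup.mul_inf_assoc N B H hNH, h2,
    Subgroup.coe_inf, Subgroup.normal_mul, Set.inter_comm]

private lemma aux_mapN (N : Subgroup G) [N.Normal] :
    Subgroup.map (QuotientGroup.mk' N) N = ⊥ := by
  rw [eq_bot_iff, Subgroup.map_le_iff_le_comap, MonoidHom.comap_bot, QuotientGroup.ker_mk']

private lemma aux_map_sup_N (N A : Subgroup G) [N.Normal] :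
    Subgroup.map (QuotientGroup.mk' N) (A ⊔ N) = Subgroup.map (QuotientGroup.mk' N) A := by
  rw [Subgroup.map_sup, aux_mapN, sup_bot_eq]

private lemma aux_comap_map (N A : Subgroup G) [N.Normal] :
    Subgroup.comap (QuotientGroup.mk' N) (Subgroup.map (QuotientGroup.mk' N) A) = A ⊔ N := by
  rw [Subgroup.comap_map_eq, QuotientGroup.ker_mk']

/-- Mapping a covering pair to the quotient: image is equal or again covering. -/
private lemma aux_map_covby (N : Subgroup G) [N.Normal] {A B : Subgroup G} (hAB : A ⋖ B) :
    Subgroup.map (QuotientGroup.mk' N) A = Subgroup.map (QuotientGroup.mk' N) B ∨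
      Subgroup.map (QuotientGroup.mk' N) A ⋖ Subgroup.map (QuotientGroup.mk' N) B := by
  set f := QuotientGroup.mk' N with hfdef
  have hf : Function.Surjective f := QuotientGroup.mk'_surjective N
  by_cases hsup : A ⊔ N = B ⊔ N
  · left
    rw [← aux_map_sup_N N A, ← aux_map_sup_N N B, hsup]
  · right
    constructor
    · refine lt_of_le_of_ne (Subgroup.map_mono hAB.lt.le) fun h => hsup ?_
      have := congrArg (Subgroup.comap f) h
      rwa [aux_comap_map, aux_comap_map] at this
    · intro Q hQ1 hQ2
      set H := Subgroup.comap f Q with hHdef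
      have hNH : N ≤ H :=
        le_trans (QuotientGroup.ker_mk' N).ge (Subgroup.ker_le_comap _ _)
      have hmapH : Subgroup.map f H = Q := Subgroup.map_comap_eq_self_of_surjective hf Q
      have hAH : A ⊔ N < H := by
        refine lt_of_le_of_ne ?_ fun h => ?_
        · rw [← aux_comap_map N A]; exact Subgroup.comap_mono hQ1.le
        · exact hQ1.ne (by rw [← hmapH, ← h, aux_map_sup_N])
      have hHB : H < B ⊔ N := by
        refine lt_of_le_of_ne ?_ fun h => ?_
        · rw [← aux_comap_map N B]; exact Subgroup.comap_mono hQ2.le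
        · exact hQ2.ne (by rw [← hmapH, h, aux_map_sup_N])
      have hA_le : A ≤ H ⊓ B := le_inf (le_trans le_sup_left hAH.le) hAB.lt.le
      rcases lt_or_eq_of_le hA_le with hlt | heq
      · have : H ⊓ B = B := by
          rcases lt_or_eq_of_le (inf_le_right : H ⊓ B ≤ B) with h | h
          · exact absurd h (hAB.2 hlt)
          · exact h
        have hBH : B ≤ H := by rw [← this]; exact inf_le_left
        exact absurd (sup_le hBH hNH) (not_le_of_gt hHB)
      · have hmod := aux_modular N H B hNH
        rw [← heq] at hmod
        rw [inf_eq_left.mpr hHB.le] at hmod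
        exact hAH.ne hmod

/-- Comap of a covering pair in the quotient is a covering pair. -/
private lemma aux_comap_covby (N : Subgroup G) [N.Normal] {P Q : Subgroup (G ⧸ N)}
    (hPQ : P ⋖ Q) :
    Subgroup.comap (QuotientGroup.mk' N) P ⋖ Subgroup.comap (QuotientGroup.mk' N) Q := by
  set f := QuotientGroup.mk' N with hfdef
  have hf : Function.Surjective f := QuotientGroup.mk'_surjective N
  have hinj : Function.Injective (Subgroup.comap f) := Subgroup.comap_injective hf
  constructor
  · exact lt_of_le_of_ne (Subgroup.comap_mono hPQ.lt.le) fun h => hPQ.lt.ne (hinj h)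
  · intro H h1 h2
    have hNH : N ≤ H :=
      le_trans (le_trans (QuotientGroup.ker_mk' N).ge (Subgroup.ker_le_comap _ _)) h1.le
    have hcm : Subgroup.comap f (Subgroup.map f H) = H := by
      rw [Subgroup.comap_map_eq, QuotientGroup.ker_mk', sup_eq_left.mpr hNH]
    have hlt1 : P < Subgroup.map f H := by
      refine lt_of_le_of_ne ?_ fun h => ?_
      · have := Subgroup.map_mono (f := f) h1.le
        rwa [Subgroup.map_comap_eq_self_of_surjective hf] at this
      · exact h1.ne (by rw [← hcm, ← h])
    have hlt2 : Subgroup.map f H < Q := by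
      refine lt_of_le_of_ne ?_ fun h => ?_
      · have := Subgroup.map_mono (f := f) h2.le
        rwa [Subgroup.map_comap_eq_self_of_surjective hf] at this
      · exact h2.ne' (by rw [← hcm, h])
    exact hPQ.2 hlt1 hlt2

/-- A subgroup of prime order is an atom. -/
private lemma aux_bot_covby (N : Subgroup G) (hN : (Nat.card N).Prime) :
    (⊥ : Subgroup G) ⋖ N := by
  have hfin : Finite N := Nat.finite_of_card_ne_zero hN.pos.ne'
  constructor
  · rw [bot_lt_iff_ne_bot]
    intro h
    rw [h, Subgroup.card_bot] at hN
    exact hN.one_lt.ne' rfl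
  · intro H h1 h2
    have hd : Nat.card H ∣ Nat.card N := Subgroup.card_dvd_of_le h2.le
    rcases hN.eq_one_or_self_of_dvd _ hd with h | h
    · exact h1.ne' (Subgroup.eq_bot_of_card_eq _ h)
    · exact h2.ne (Subgroup.eq_of_le_of_card_ge h2.le h.ge)

/-- Turn a sequence of equal-or-cover steps into a genuine covering series,
with length accounting. -/
private lemma aux_dedup {L : Type*} [PartialOrder L] :
    ∀ (t : ℕ) (g : Fin (t + 1) → L),
      (∀ i : Fin t, g i.castSucc = g i.succ ∨ g i.castSucc ⋖ g i.succ) →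
      ∃ p : RelSeries {(a, b) : L × L | a ⋖ b}, p.head = g 0 ∧ p.last = g (Fin.last t) ∧
        p.length ≤ t ∧ ((∃ i : Fin t, g i.castSucc = g i.succ) → p.length + 1 ≤ t) := by
  intro t
  induction t with
  | zero =>
    intro g _
    exact ⟨RelSeries.singleton _ (g 0), rfl, rfl, le_refl 0, fun ⟨i, _⟩ => i.elim0⟩
  | succ t ih =>
    intro g hstep
    obtain ⟨p, h0, hl, hlen, hlen'⟩ := ih (fun i => g i.succ) (fun i => by
      have := hstep i.succ
      rwa [← Fin.succ_castSucc] at this)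
    have hlast : g (Fin.last t).succ = g (Fin.last (t + 1)) := by rw [Fin.succ_last]
    rcases hstep 0 with h01 | h01
    · refine ⟨p, ?_, by rw [hl, hlast], le_trans hlen (Nat.le_succ t), fun _ => by omega⟩
      rw [h0]
      simpa using h01.symm
    · have hrel : (fun a b => a ⋖ b) (g 0) p.head := by
        rw [h0]
        simpa using h01
      refine ⟨p.cons (g 0) hrel, by simp, ?_, ?_, ?_⟩
      · rw [RelSeries.last_cons, hl, hlast]
      · simpa using Nat.succ_le_succ hlen
      · rintro ⟨i, hi⟩
        rcases Fin.eq_zero_or_eq_succ i with rfl | ⟨j, rfl⟩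
        · exact absurd hi (by simpa using h01.ne)
        · have : p.length + 1 ≤ t := hlen' ⟨j, by rwa [← Fin.succ_castSucc] at hi⟩
          have hclen : (p.cons (g 0) hrel).length = p.length + 1 := by
            simp
          omega

/-- Every finite group has a maximal (covering) chain from any subgroup to `⊤`. -/
private lemma aux_exists_chain [Finite G] (a : Subgroup G) :
    ∃ p : RelSeries {(a, b) : Subgroup G × Subgroup G | a ⋖ b},
      p.head = a ∧ p.last = ⊤ := by
  have hwlt : WellFoundedLT (Subgroup G) := Finite.to_wellFoundedLT
  have hsa : IsStronglyAtomic (Subgroup G) :=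
    IsStronglyAtomic.of_wellFounded_lt wellFounded_lt
  have hwgt : WellFoundedGT (Subgroup G) := Finite.to_wellFoundedGT
  refine hwgt.wf.induction
    (C := fun a => ∃ p : RelSeries {(a, b) : Subgroup G × Subgroup G | a ⋖ b},
      p.head = a ∧ p.last = ⊤) a ?_
  intro a ih
  rcases eq_or_lt_of_le (le_top (a := a)) with h | h
  · exact ⟨RelSeries.singleton _ a, rfl, by rw [RelSeries.last_singleton, h]⟩
  · obtain ⟨b, hab, _⟩ := h.exists_covby_le
    obtain ⟨p, hb, htop⟩ := ih b hab.lt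
    exact ⟨p.cons a (hb ▸ hab), by simp, by rw [RelSeries.last_cons, htop]⟩

/-- Membership in the depth set via `RelSeries`. -/
private lemma aux_mem_iff {H : Type*} [Group H] (t : ℕ) :
    (∃ s : Fin (t + 1) → Subgroup H, IsUnrefinableChain s) ↔
    ∃ p : RelSeries {(a, b) : Subgroup H × Subgroup H | a ⋖ b},
      p.head = ⊥ ∧ p.last = ⊤ ∧ p.length = t := by
  constructor
  · rintro ⟨s, h0, hl, hs⟩
    exact ⟨⟨t, s, hs⟩, h0, hl, rfl⟩
  · rintro ⟨p, h0, hl, rfl⟩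
    exact ⟨p.toFun, h0, hl, p.step⟩

end AuxDepth

/-- if `N ⊴ G` has prime order then `λ(G) = λ(G/N) + 1`. -/
theorem depth_eq_depth_quotient_add_one (G : Type*) [Group G] [Finite G]
    (N : Subgroup G) [N.Normal] (hN : (Nat.card N).Prime) :
    groupDepth G = groupDepth (G ⧸ N) + 1 := by
  classical
  have hf : Function.Surjective (QuotientGroup.mk' N) := QuotientGroup.mk'_surjective N
  have hNbot : N ≠ ⊥ := by
    intro h
    rw [h, Subgroup.card_bot] at hN
    exact hN.one_lt.ne' rfl
  rw [groupDepth, groupDepth]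
  set SG := {t | ∃ s : Fin (t + 1) → Subgroup G, IsUnrefinableChain s} with hSGdef
  set SQ := {t | ∃ s : Fin (t + 1) → Subgroup (G ⧸ N), IsUnrefinableChain s} with hSQdef
  have hSGne : SG.Nonempty := by
    obtain ⟨p, h1, h2⟩ := aux_exists_chain (G := G) ⊥
    exact ⟨p.length, (aux_mem_iff _).mpr ⟨p, h1, h2, rfl⟩⟩
  have hSQne : SQ.Nonempty := by
    obtain ⟨p, h1, h2⟩ := aux_exists_chain (G := G ⧸ N) ⊥
    exact ⟨p.length, (aux_mem_iff _).mpr ⟨p, h1, h2, rfl⟩⟩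
  -- upper bound: sInf SG ≤ sInf SQ + 1
  obtain ⟨q, hq0, hql, hqlen⟩ := (aux_mem_iff _).mp (Nat.sInf_mem hSQne)
  have hub : sInf SG ≤ sInf SQ + 1 := by
    let r : RelSeries {(a, b) : Subgroup G × Subgroup G | a ⋖ b} :=
      ⟨q.length, fun i => Subgroup.comap (QuotientGroup.mk' N) (q.toFun i),
        fun i => aux_comap_covby N (q.step i)⟩
    have hrhead : r.head = N := by
      show Subgroup.comap (QuotientGroup.mk' N) (q.toFun 0) = N
      rw [show q.toFun 0 = q.head from rfl, hq0, MonoidHom.comap_bot, QuotientGroup.ker_mk']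
    have hrlast : r.last = ⊤ := by
      show Subgroup.comap (QuotientGroup.mk' N) (q.toFun (Fin.last _)) = ⊤
      rw [show q.toFun (Fin.last _) = q.last from rfl, hql, Subgroup.comap_top]
    have hcov : (fun a b => a ⋖ b) (⊥ : Subgroup G) r.head := by
      rw [hrhead]; exact aux_bot_covby N hN
    have hmem : q.length + 1 ∈ SG := by
      refine (aux_mem_iff _).mpr ⟨r.cons ⊥ hcov, by simp, ?_, ?_⟩
      · rw [RelSeries.last_cons, hrlast]
      · simp [r]
    calc sInf SG ≤ q.length + 1 := Nat.sInf_le hmem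
      _ = sInf SQ + 1 := by rw [hqlen]
  -- lower bound: sInf SQ + 1 ≤ sInf SG
  obtain ⟨p, hp0, hpl, hplen⟩ := (aux_mem_iff _).mp (Nat.sInf_mem hSGne)
  obtain ⟨w, hw0, hwl, hwlen, hwlen'⟩ := aux_dedup p.length
    (fun i => Subgroup.map (QuotientGroup.mk' N) (p.toFun i))
    (fun i => aux_map_covby N (p.step i))
  -- there is a collapsing step
  have hcollapse : ∃ i : Fin p.length,
      Subgroup.map (QuotientGroup.mk' N) (p.toFun i.castSucc) =
        Subgroup.map (QuotientGroup.mk' N) (p.toFun i.succ) := by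
    have key : ∀ k : Fin (p.length + 1), N ≤ p.toFun k →
        ∃ j : Fin p.length, ¬ N ≤ p.toFun j.castSucc ∧ N ≤ p.toFun j.succ := by
      intro k
      induction k using Fin.induction with
      | zero =>
        intro h
        rw [show p.toFun 0 = p.head from rfl, hp0] at h
        exact absurd (le_bot_iff.mp h) hNbot
      | succ i ih =>
        intro h
        by_cases hc : N ≤ p.toFun i.castSucc
        · exact ih hc
        · exact ⟨i, hc, h⟩
    obtain ⟨j, hnA, hNB⟩ := key (Fin.last _) (by
      rw [show p.toFun (Fin.last _) = p.last from rfl, hpl]; exact le_top)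
    have hAB : p.toFun j.castSucc ⋖ p.toFun j.succ := p.step j
    have h1 : p.toFun j.castSucc < p.toFun j.castSucc ⊔ N :=
      lt_of_le_of_ne le_sup_left fun h => hnA (h ▸ le_sup_right)
    have h2 : p.toFun j.castSucc ⊔ N ≤ p.toFun j.succ := sup_le hAB.lt.le hNB
    have heq : p.toFun j.castSucc ⊔ N = p.toFun j.succ := by
      rcases lt_or_eq_of_le h2 with h | h
      · exact absurd h (hAB.2 h1)
      · exact h
    exact ⟨j, by rw [← aux_map_sup_N N (p.toFun j.castSucc), heq]⟩
  have hwlen2 : w.length + 1 ≤ p.length := hwlen' hcollapse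
  have hwmem : w.length ∈ SQ := by
    refine (aux_mem_iff _).mpr ⟨w, ?_, ?_, rfl⟩
    · rw [hw0, show p.toFun 0 = p.head from rfl, hp0, Subgroup.map_bot]
    · rw [hwl, show p.toFun (Fin.last _) = p.last from rfl, hpl,
        ← MonoidHom.range_eq_map, MonoidHom.range_eq_top.mpr hf]
  have hlb : sInf SQ ≤ w.length := Nat.sInf_le hwmem
  omega
end

section
/- If G is a finite group, B is a subgroup of G, and A is a normal subgroup of B, then the chain difference of G is at least the chain difference of B/A plus the chain difference of A. In particular, cd(G) ≥ cd(L) for every section L of G. -/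
open Subgroup

section ChainLemmas

variable {α β : Type*} [PartialOrder α] [PartialOrder β]

/-- There is a chain of covers from `x` to `y` of length `t`. -/
def HasChain (x y : α) (t : ℕ) : Prop :=
  ∃ c : RelSeries {p : α × α | p.1 ⋖ p.2}, c.head = x ∧ c.last = y ∧ c.length = t

lemma HasChain.trans {x y z : α} {m n : ℕ} (h1 : HasChain x y m) (h2 : HasChain y z n) :
    HasChain x z (m + n) := by
  obtain ⟨c1, hc1h, hc1l, hc1t⟩ := h1
  obtain ⟨c2, hc2h, hc2l, hc2t⟩ := h2
  exact ⟨c1.smash c2 (by rw [hc1l, hc2h]), by simp [hc1h], by simp [hc2l], by simp [hc1t, hc2t]⟩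

lemma HasChain.map (f : α ↪o β) (hf : (Set.range f).OrdConnected) {x y : α} {t : ℕ}
    (h : HasChain x y t) : HasChain (f x) (f y) t := by
  obtain ⟨c, hh, hl, ht⟩ := h
  exact ⟨c.map ⟨f, fun hab => (hf.apply_covBy_apply_iff f).2 hab⟩,
    by simp only [RelSeries.head_map, hh]; rfl,
    by simp only [RelSeries.last_map, hl]; rfl,
    by simpa using ht⟩

lemma exists_hasChain_top [Finite α] [OrderTop α] (x : α) : ∃ k, HasChain x (⊤ : α) k := by
  induction x using (wellFounded_gt (α := α)).induction with
  | _ x ih =>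
    rcases eq_or_lt_of_le (le_top (a := x)) with rfl | hx
    · exact ⟨0, RelSeries.singleton {p : α × α | p.1 ⋖ p.2} ⊤, rfl, rfl, rfl⟩
    · obtain ⟨y, hy, hmin⟩ := (wellFounded_lt (α := α)).has_min {z | x < z} ⟨⊤, hx⟩
      have hcov : x ⋖ y := ⟨hy, fun z hz hzy => hmin z hz hzy⟩
      obtain ⟨k, hk⟩ := ih y hy
      exact ⟨1 + k, HasChain.trans
        ⟨(RelSeries.singleton {p : α × α | p.1 ⋖ p.2} x).snoc y (by simpa using hcov),
          by simp, by simp, rfl⟩ hk⟩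

lemma bddAbove_hasChain [Finite α] {x y : α} : BddAbove {t : ℕ | HasChain x y t} := by
  refine ⟨Nat.card α, fun t ht => ?_⟩
  obtain ⟨c, -, -, hct⟩ := ht
  have hsm : StrictMono c.toFun :=
    Fin.strictMono_iff_lt_succ.2 fun i => CovBy.lt (c.step i)
  have := Nat.card_le_card_of_injective c.toFun hsm.injective
  simp only [Nat.card_eq_fintype_card, Fintype.card_fin] at this
  omega

/-- Transfer a full chain along an order iso onto `Set.Iic a`. -/
lemma HasChain.of_iso_Iic [BoundedOrder α] [OrderBot β] (a : β) (e : α ≃o Set.Iic a) {t : ℕ}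
    (h : HasChain (⊥ : α) (⊤ : α) t) : HasChain (⊥ : β) a t := by
  let f : α ↪o β := e.toOrderEmbedding.trans (OrderEmbedding.subtype _)
  have hfa : ∀ w : α, f w = ((e w : Set.Iic a) : β) := fun w => rfl
  have hrange : Set.range f = Set.Iic a := by
    ext z
    constructor
    · rintro ⟨w, rfl⟩; rw [hfa]; exact (e w).2
    · intro hz
      exact ⟨e.symm ⟨z, hz⟩, by rw [hfa, OrderIso.apply_symm_apply]⟩
  have h' := h.map f (hrange ▸ Set.ordConnected_Iic)
  have h0 : f ⊥ = (⊥ : β) := by rw [hfa, OrderIso.map_bot e]; rfl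
  have h1 : f ⊤ = a := by rw [hfa, OrderIso.map_top e]; rfl
  rwa [h0, h1] at h'

/-- Transfer a full chain along an order iso onto `Set.Ici a`. -/
lemma HasChain.of_iso_Ici [BoundedOrder α] [OrderTop β] (a : β) (e : α ≃o Set.Ici a) {t : ℕ}
    (h : HasChain (⊥ : α) (⊤ : α) t) : HasChain a (⊤ : β) t := by
  let f : α ↪o β := e.toOrderEmbedding.trans (OrderEmbedding.subtype _)
  have hfa : ∀ w : α, f w = ((e w : Set.Ici a) : β) := fun w => rfl
  have hrange : Set.range f = Set.Ici a := by
    ext z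
    constructor
    · rintro ⟨w, rfl⟩; rw [hfa]; exact (e w).2
    · intro hz
      exact ⟨e.symm ⟨z, hz⟩, by rw [hfa, OrderIso.apply_symm_apply]⟩
  have h' := h.map f (hrange ▸ Set.ordConnected_Ici)
  have h0 : f ⊥ = a := by rw [hfa, OrderIso.map_bot e]; rfl
  have h1 : f ⊤ = (⊤ : β) := by rw [hfa, OrderIso.map_top e]; rfl
  rwa [h0, h1] at h'

end ChainLemmas

section Isos

variable {G : Type*} [Group G]

/-- The subgroups of a subgroup `B` correspond to the subgroups of `G` below `B`. -/
def subgroupIicOrderIso (B : Subgroup G) : Subgroup B ≃o Set.Iic B where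
  toFun K := ⟨K.map B.subtype, map_subtype_le K⟩
  invFun K := K.1.comap B.subtype
  left_inv K := comap_map_eq_self_of_injective B.subtype_injective K
  right_inv K := by
    ext1
    show map B.subtype (comap B.subtype K.1) = K.1
    rw [map_comap_eq, B.range_subtype]
    exact inf_eq_right.2 K.2
  map_rel_iff' {K L} := by
    simp only [Equiv.coe_fn_mk, Subtype.mk_le_mk]
    exact map_le_map_iff_of_injective B.subtype_injective

/-- The subgroups of `G ⧸ N` correspond to the subgroups of `G` above `N`. -/
def quotientIciOrderIso (N : Subgroup G) [N.Normal] : Subgroup (G ⧸ N) ≃o Set.Ici N where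
  toFun H := ⟨H.comap (QuotientGroup.mk' N), fun x hx => by
    rw [mem_comap]
    have : (QuotientGroup.mk' N) x = 1 := (QuotientGroup.eq_one_iff x).2 hx
    rw [this]; exact H.one_mem⟩
  invFun K := K.1.map (QuotientGroup.mk' N)
  left_inv H := map_comap_eq_self_of_surjective (QuotientGroup.mk'_surjective N) H
  right_inv K := by
    ext1
    show comap (QuotientGroup.mk' N) (map (QuotientGroup.mk' N) K.1) = K.1
    rw [comap_map_eq, QuotientGroup.ker_mk']
    exact sup_eq_left.2 K.2
  map_rel_iff' {H L} := by
    simp only [Equiv.coe_fn_mk, Subtype.mk_le_mk]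
    exact comap_le_comap_of_surjective (QuotientGroup.mk'_surjective N)

end Isos

lemma unrefinable_set_eq (G : Type*) [Group G] :
    {t | ∃ s : Fin (t + 1) → Subgroup G, IsUnrefinableChain s} =
      {t | HasChain (⊥ : Subgroup G) (⊤ : Subgroup G) t} := by
  ext t
  constructor
  · rintro ⟨s, h0, h1, h2⟩
    exact ⟨⟨t, s, h2⟩, h0, h1, rfl⟩
  · rintro ⟨c, hh, hl, rfl⟩
    exact ⟨c.toFun, hh, hl, c.step⟩

lemma groupLength_eq (G : Type*) [Group G] :
    groupLength G = sSup {t | HasChain (⊥ : Subgroup G) (⊤ : Subgroup G) t} := by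
  rw [groupLength, unrefinable_set_eq]

lemma groupDepth_eq (G : Type*) [Group G] :
    groupDepth G = sInf {t | HasChain (⊥ : Subgroup G) (⊤ : Subgroup G) t} := by
  rw [groupDepth, unrefinable_set_eq]

/-- `cd(G) ≥ cd(B/A) + cd(A)` for `A ⊴ B ≤ G`.
In particular `cd(G) ≥ cd(L)` for every section `L` of `G`. -/
theorem chainDiff_ge_section (G : Type*) [Group G] [Finite G]
    (B : Subgroup G) (A : Subgroup B) [A.Normal] :
    chainDiff (B ⧸ A) + chainDiff A ≤ chainDiff G := by
  classical
  -- a chain from B to ⊤ in G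
  obtain ⟨k, hk⟩ := exists_hasChain_top (α := Subgroup G) B
  -- transfer function: chains of A and of B⧸A give chains of G
  have key : ∀ tA tQ : ℕ, HasChain (⊥ : Subgroup A) (⊤ : Subgroup A) tA →
      HasChain (⊥ : Subgroup (B ⧸ A)) (⊤ : Subgroup (B ⧸ A)) tQ →
      HasChain (⊥ : Subgroup G) (⊤ : Subgroup G) (tA + tQ + k) := by
    intro tA tQ hA hQ
    have cA : HasChain (⊥ : Subgroup B) A tA := hA.of_iso_Iic A (subgroupIicOrderIso A)
    have cQ : HasChain A (⊤ : Subgroup B) tQ := hQ.of_iso_Ici A (quotientIciOrderIso A)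
    have cB : HasChain (⊥ : Subgroup B) (⊤ : Subgroup B) (tA + tQ) := cA.trans cQ
    have cG : HasChain (⊥ : Subgroup G) B (tA + tQ) :=
      cB.of_iso_Iic B (subgroupIicOrderIso B)
    exact cG.trans hk
  have finSub : ∀ (H : Type _) [Group H] [Finite H], Finite (Subgroup H) := by
    intro H _ _
    exact Finite.of_injective (fun K : Subgroup H => (K : Set H)) SetLike.coe_injective
  have : Finite (Subgroup G) := finSub G
  have : Finite (Subgroup B) := finSub B
  have : Finite (Subgroup A) := finSub A
  have : Finite (Subgroup (B ⧸ A)) := finSub (B ⧸ A)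
  have neA : {t | HasChain (⊥ : Subgroup A) (⊤ : Subgroup A) t}.Nonempty :=
    exists_hasChain_top ⊥
  have neQ : {t | HasChain (⊥ : Subgroup (B ⧸ A)) (⊤ : Subgroup (B ⧸ A)) t}.Nonempty :=
    exists_hasChain_top ⊥
  have hlA : groupLength A ∈ {t | HasChain (⊥ : Subgroup A) (⊤ : Subgroup A) t} := by
    rw [groupLength_eq A]
    exact Nat.sSup_mem neA bddAbove_hasChain
  have hdA : groupDepth A ∈ {t | HasChain (⊥ : Subgroup A) (⊤ : Subgroup A) t} := by
    rw [groupDepth_eq A]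
    exact Nat.sInf_mem neA
  have hlQ : groupLength (B ⧸ A) ∈
      {t | HasChain (⊥ : Subgroup (B ⧸ A)) (⊤ : Subgroup (B ⧸ A)) t} := by
    rw [groupLength_eq (B ⧸ A)]
    exact Nat.sSup_mem neQ bddAbove_hasChain
  have hdQ : groupDepth (B ⧸ A) ∈
      {t | HasChain (⊥ : Subgroup (B ⧸ A)) (⊤ : Subgroup (B ⧸ A)) t} := by
    rw [groupDepth_eq (B ⧸ A)]
    exact Nat.sInf_mem neQ
  have h1 : groupLength A + groupLength (B ⧸ A) + k ≤ groupLength G := by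
    rw [groupLength_eq G]
    exact le_csSup bddAbove_hasChain (key _ _ hlA hlQ)
  have h2 : groupDepth G ≤ groupDepth A + groupDepth (B ⧸ A) + k := by
    rw [groupDepth_eq G]
    exact Nat.sInf_le (key _ _ hdA hdQ)
  have h3 : groupDepth A ≤ groupLength A := by
    rw [groupDepth_eq A]
    exact Nat.sInf_le hlA
  have h4 : groupDepth (B ⧸ A) ≤ groupLength (B ⧸ A) := by
    rw [groupDepth_eq (B ⧸ A)]
    exact Nat.sInf_le hlQ
  unfold chainDiff
  omega
end

section
/- Let G be a finite group with a chain of subgroups 1 = G_m ◁ G_{m−1} ◁ ... ◁ G_1 ◁ G_0 = G, where each G_i is normal in G_{i−1}. Then cd(G) ≥ Σ_i cd(G_{i−1}/G_i). In particular, if T_1, ..., T_m are the composition factors of G listed with multiplicity, then cd(G) ≥ Σ_i cd(T_i). -/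
namespace CDAux

def chainSet (G : Type*) [Group G] : Set ℕ :=
  {t | ∃ s : Fin (t + 1) → Subgroup G, IsUnrefinableChain s}

variable {G H : Type*} [Group G] [Group H]

lemma covBy_map_subtype (N : Subgroup G) {x y : Subgroup ↥N} (h : x ⋖ y) :
    x.map N.subtype ⋖ y.map N.subtype := by
  have hinj := N.subtype_injective
  constructor
  · exact lt_of_le_of_ne (Subgroup.map_mono h.1.le)
      (fun he => h.1.ne (Subgroup.map_injective hinj he))
  · intro c hc1 hc2
    have hcN : c ≤ N := hc2.le.trans (Subgroup.map_subtype_le y)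
    have hmc : (c.comap N.subtype).map N.subtype = c := by
      rw [Subgroup.map_comap_eq, Subgroup.range_subtype, inf_eq_right.2 hcN]
    have hx : x = (x.map N.subtype).comap N.subtype :=
      (Subgroup.comap_map_eq_self_of_injective hinj x).symm
    have hy : (y.map N.subtype).comap N.subtype = y :=
      Subgroup.comap_map_eq_self_of_injective hinj y
    refine h.2 (show x < c.comap N.subtype from ?_) (show c.comap N.subtype < y from ?_)
    · refine lt_of_le_of_ne (hx ▸ Subgroup.comap_mono hc1.le) (fun he => hc1.ne ?_)
      rw [he, hmc]
    · refine lt_of_le_of_ne (hy ▸ Subgroup.comap_mono hc2.le) (fun he => hc2.ne ?_)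
      rw [← hmc, he]

lemma covBy_comap_mk' (N : Subgroup G) [N.Normal] {x y : Subgroup (G ⧸ N)} (h : x ⋖ y) :
    x.comap (QuotientGroup.mk' N) ⋖ y.comap (QuotientGroup.mk' N) := by
  have hsurj := QuotientGroup.mk'_surjective N
  constructor
  · exact lt_of_le_of_ne (Subgroup.comap_mono h.1.le)
      (fun he => h.1.ne (Subgroup.comap_injective hsurj he))
  · intro c hc1 hc2
    have hker : (QuotientGroup.mk' N).ker ≤ c :=
      le_trans (Subgroup.ker_le_comap (f := QuotientGroup.mk' N) x) hc1.le
    have hcm : (c.map (QuotientGroup.mk' N)).comap (QuotientGroup.mk' N) = c :=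
      Subgroup.comap_map_eq_self hker
    have hx : (x.comap (QuotientGroup.mk' N)).map (QuotientGroup.mk' N) = x :=
      Subgroup.map_comap_eq_self_of_surjective hsurj x
    have hy : (y.comap (QuotientGroup.mk' N)).map (QuotientGroup.mk' N) = y :=
      Subgroup.map_comap_eq_self_of_surjective hsurj y
    refine h.2 (show x < c.map (QuotientGroup.mk' N) from ?_) (show c.map (QuotientGroup.mk' N) < y from ?_)
    · refine lt_of_le_of_ne (hx ▸ Subgroup.map_mono hc1.le) (fun he => hc1.ne ?_)
      rw [← hcm, ← he]
    · refine lt_of_le_of_ne (hy ▸ Subgroup.map_mono hc2.le) (fun he => hc2.ne ?_)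
      rw [← hcm, he]

lemma covBy_map_equiv (e : G ≃* H) {x y : Subgroup G} (h : x ⋖ y) :
    x.map e.toMonoidHom ⋖ y.map e.toMonoidHom := by
  have hinj : Function.Injective e.toMonoidHom := e.injective
  constructor
  · exact lt_of_le_of_ne (Subgroup.map_mono h.1.le)
      (fun he => h.1.ne (Subgroup.map_injective hinj he))
  · intro c hc1 hc2
    have hcm : (c.comap e.toMonoidHom).map e.toMonoidHom = c :=
      Subgroup.map_comap_eq_self_of_surjective e.surjective c
    have hx : (x.map e.toMonoidHom).comap e.toMonoidHom = x :=
      Subgroup.comap_map_eq_self_of_injective hinj x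
    have hy : (y.map e.toMonoidHom).comap e.toMonoidHom = y :=
      Subgroup.comap_map_eq_self_of_injective hinj y
    refine h.2 (show x < c.comap e.toMonoidHom from ?_) (show c.comap e.toMonoidHom < y from ?_)
    · refine lt_of_le_of_ne (hx ▸ Subgroup.comap_mono hc1.le) (fun he => hc1.ne ?_)
      rw [he, hcm]
    · refine lt_of_le_of_ne (hy ▸ Subgroup.comap_mono hc2.le) (fun he => hc2.ne ?_)
      rw [← he]
      exact hcm.symm

lemma chainSet_subset_of_equiv (e : G ≃* H) {t : ℕ} (ht : t ∈ chainSet G) : t ∈ chainSet H := by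
  obtain ⟨s, h0, hl, hc⟩ := ht
  refine ⟨fun i => (s i).map e.toMonoidHom, ?_, ?_, fun i => covBy_map_equiv e (hc i)⟩
  · simp only [h0, Subgroup.map_bot]
  · simp only [hl, Subgroup.map_top_of_surjective e.toMonoidHom (by exact e.surjective)]

lemma chainSet_eq_of_equiv (e : G ≃* H) : chainSet G = chainSet H :=
  Set.Subset.antisymm (fun _ ht => chainSet_subset_of_equiv e ht)
    (fun _ ht => chainSet_subset_of_equiv e.symm ht)

lemma chainDiff_congr (e : G ≃* H) : chainDiff G = chainDiff H := by
  unfold chainDiff groupLength groupDepth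
  rw [show {t | ∃ s : Fin (t + 1) → Subgroup G, IsUnrefinableChain s} = chainSet G from rfl,
    show {t | ∃ s : Fin (t + 1) → Subgroup H, IsUnrefinableChain s} = chainSet H from rfl,
    chainSet_eq_of_equiv e]

end CDAux
namespace CDAux

variable {G H : Type*} [Group G] [Group H]

lemma exists_chain_to [Finite G] (a : Subgroup G) :
    ∃ (t : ℕ) (s : Fin (t + 1) → Subgroup G), s 0 = ⊥ ∧ s (Fin.last t) = a ∧
      ∀ i : Fin t, s i.castSucc ⋖ s i.succ := by
  induction a using WellFoundedLT.induction with
  | ind a IH =>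
    rcases eq_or_ne a ⊥ with rfl | hne
    · exact ⟨0, fun _ => ⊥, rfl, rfl, fun i => i.elim0⟩
    · have hbot : ⊥ < a := bot_lt_iff_ne_bot.2 hne
      obtain ⟨b, hbS, hmin⟩ :=
        (Finite.to_wellFoundedGT (α := Subgroup G)).wf.has_min {x | x < a} ⟨⊥, hbot⟩
      have hcov : b ⋖ a := ⟨hbS, fun c h1 h2 => hmin c h2 h1⟩
      obtain ⟨t, s, h0, hl, hc⟩ := IH b hbS
      refine ⟨t + 1, Fin.snoc s a, ?_, ?_, ?_⟩
      · rw [show (0 : Fin (t + 2)) = Fin.castSucc 0 by rfl, Fin.snoc_castSucc]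
        exact h0
      · exact Fin.snoc_last _ _
      · intro i
        induction i using Fin.lastCases with
        | last =>
          rw [Fin.succ_last, Fin.snoc_last, Fin.snoc_castSucc, hl]
          exact hcov
        | cast j =>
          rw [Fin.succ_castSucc, Fin.snoc_castSucc, Fin.snoc_castSucc]
          exact hc j

lemma chainSet_nonempty [Finite G] : (chainSet G).Nonempty := by
  obtain ⟨t, s, h0, hl, hc⟩ := exists_chain_to (⊤ : Subgroup G)
  exact ⟨t, s, h0, hl, hc⟩

lemma chainSet_bddAbove [Finite G] : BddAbove (chainSet G) := by
  refine ⟨Nat.card (Subgroup G), fun t ht => ?_⟩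
  obtain ⟨s, h0, hl, hc⟩ := ht
  have hsm : StrictMono s := Fin.strictMono_iff_lt_succ.2 fun i => (hc i).1
  have := Nat.card_le_card_of_injective s hsm.injective
  simp only [Nat.card_eq_fintype_card, Fintype.card_fin] at this
  omega

end CDAux
namespace CDAux

variable {G H : Type*} [Group G] [Group H]

lemma glue (N : Subgroup G) [N.Normal] {a b : ℕ}
    (ha : a ∈ chainSet ↥N) (hb : b ∈ chainSet (G ⧸ N)) : a + b ∈ chainSet G := by
  obtain ⟨sN, hN0, hNl, hNc⟩ := ha
  obtain ⟨sQ, hQ0, hQl, hQc⟩ := hb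
  set f : Fin (a + b + 1) → Subgroup G := fun i =>
    if h : i.val ≤ a then (sN ⟨i.val, by omega⟩).map N.subtype
    else (sQ ⟨i.val - a, by omega⟩).comap (QuotientGroup.mk' N) with hf
  have key : ∀ i : Fin (a + b + 1), a ≤ i.val →
      f i = (sQ ⟨i.val - a, by omega⟩).comap (QuotientGroup.mk' N) := by
    intro i hi
    rcases eq_or_lt_of_le hi with heq | hlt
    · have h1 : f i = (sN ⟨a, by omega⟩).map N.subtype := by
        rw [hf]; simp only [← heq, le_refl, dif_pos]
      have h2 : sN ⟨a, by omega⟩ = ⊤ := by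
        have : (⟨a, by omega⟩ : Fin (a + 1)) = Fin.last a := rfl
        rw [this, hNl]
      have h3 : sQ ⟨i.val - a, by omega⟩ = ⊥ := by
        have : (⟨i.val - a, by omega⟩ : Fin (b + 1)) = 0 := by
          apply Fin.ext; simp [← heq]
        rw [this, hQ0]
      rw [h1, h2, h3, MonoidHom.comap_bot, QuotientGroup.ker_mk',
        ← MonoidHom.range_eq_map, Subgroup.range_subtype]
    · rw [hf]; simp only [dif_neg (by omega : ¬ i.val ≤ a)]
  refine ⟨f, ?_, ?_, ?_⟩
  · have : f 0 = (sN ⟨0, by omega⟩).map N.subtype := by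
      rw [hf]; simp
    rw [this, show (⟨0, by omega⟩ : Fin (a + 1)) = 0 from rfl, hN0, Subgroup.map_bot]
  · rw [key (Fin.last (a + b)) (by simp [Fin.last])]
    have : (⟨(Fin.last (a + b)).val - a, by omega⟩ : Fin (b + 1)) = Fin.last b := by
      apply Fin.ext; simp [Fin.last]
    rw [this, hQl, Subgroup.comap_top]
  · intro i
    rcases Nat.lt_or_ge i.val a with hia | hia
    · have h1 : f i.castSucc = (sN ⟨i.val, by omega⟩).map N.subtype := by
        rw [hf]; simp only [Fin.coe_castSucc, dif_pos (by omega : i.val ≤ a)]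
      have h2 : f i.succ = (sN ⟨i.val + 1, by omega⟩).map N.subtype := by
        rw [hf]; simp only [Fin.val_succ, dif_pos (by omega : i.val + 1 ≤ a)]
      rw [h1, h2]
      exact covBy_map_subtype N
        (hNc ⟨i.val, by omega⟩ : sN (Fin.castSucc ⟨i.val, by omega⟩) ⋖ sN (Fin.succ ⟨i.val, by omega⟩))
    · have h1 : f i.castSucc = (sQ ⟨i.val - a, by omega⟩).comap (QuotientGroup.mk' N) :=
        key i.castSucc (by simpa using hia)
      have h2 : f i.succ = (sQ ⟨i.val + 1 - a, by omega⟩).comap (QuotientGroup.mk' N) :=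
        key i.succ (by simp [Fin.val_succ]; omega)
      rw [h1, h2]
      have hcov := hQc ⟨i.val - a, by omega⟩
      have e1 : (Fin.castSucc ⟨i.val - a, by omega⟩ : Fin (b + 1)) = ⟨i.val - a, by omega⟩ := rfl
      have e2 : (Fin.succ ⟨i.val - a, by omega⟩ : Fin (b + 1)) = ⟨i.val + 1 - a, by omega⟩ := by
        apply Fin.ext; simp [Fin.val_succ]; omega
      rw [e1, e2] at hcov
      exact covBy_comap_mk' N hcov

lemma length_mem [Finite G] : groupLength G ∈ chainSet G :=
  Nat.sSup_mem chainSet_nonempty chainSet_bddAbove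

lemma depth_mem [Finite G] : groupDepth G ∈ chainSet G :=
  Nat.sInf_mem chainSet_nonempty

lemma key_ineq [Finite G] (N : Subgroup G) [N.Normal] :
    chainDiff ↥N + chainDiff (G ⧸ N) ≤ chainDiff G := by
  have h1 : groupLength ↥N + groupLength (G ⧸ N) ≤ groupLength G :=
    le_csSup chainSet_bddAbove (glue N length_mem length_mem)
  have h2 : groupDepth G ≤ groupDepth ↥N + groupDepth (G ⧸ N) :=
    Nat.sInf_le (glue N depth_mem depth_mem)
  have h3 : groupDepth ↥N ≤ groupLength ↥N := Nat.sInf_le length_mem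
  have h4 : groupDepth (G ⧸ N) ≤ groupLength (G ⧸ N) := Nat.sInf_le length_mem
  unfold chainDiff
  omega

end CDAux
namespace CDAux

lemma main_aux {Γ : Type*} [Group Γ] [Finite Γ] (m : ℕ) :
    ∀ (s : Fin (m + 1) → Subgroup Γ) (_hlast : s (Fin.last m) = ⊥)
      (_hle : ∀ i : Fin m, s i.succ ≤ s i.castSucc)
      (_hnorm : ∀ i : Fin m, ((s i.succ).subgroupOf (s i.castSucc)).Normal),
      ∑ i : Fin m, chainDiff ((s i.castSucc) ⧸ (s i.succ).subgroupOf (s i.castSucc)) ≤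
        chainDiff ↥(s 0) := by
  induction m with
  | zero => intro s _ _ _; simp
  | succ m IH =>
    intro s hlast hle hnorm
    have IH' : ∑ j : Fin m,
        chainDiff ((s (j.succ).castSucc) ⧸ (s (j.succ).succ).subgroupOf (s (j.succ).castSucc)) ≤
          chainDiff ↥(s (0 : Fin (m + 1)).succ) := by
      have := IH (fun j => s j.succ)
        (by show s (Fin.last m).succ = ⊥; rw [Fin.succ_last]; exact hlast)
        (fun j => hle j.succ) (fun j => hnorm j.succ)
      exact this
    rw [Fin.sum_univ_succ]
    set H := s (0 : Fin (m + 1)).castSucc with hH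
    set K := s (0 : Fin (m + 1)).succ with hK
    have hn : (K.subgroupOf H).Normal := hnorm 0
    have k1 : chainDiff ↥(K.subgroupOf H) + chainDiff (↥H ⧸ K.subgroupOf H) ≤ chainDiff ↥H :=
      key_ineq (K.subgroupOf H)
    have k2 : chainDiff ↥(K.subgroupOf H) = chainDiff ↥K :=
      chainDiff_congr (Subgroup.subgroupOfEquivOfLe (hle 0))
    have hH0 : H = s 0 := by rw [hH, Fin.castSucc_zero]
    calc chainDiff (↥H ⧸ K.subgroupOf H) +
          ∑ j : Fin m,
            chainDiff ((s (j.succ).castSucc) ⧸ (s (j.succ).succ).subgroupOf (s (j.succ).castSucc))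
        ≤ chainDiff (↥H ⧸ K.subgroupOf H) + chainDiff ↥K := by
          exact add_le_add (le_refl _) IH'
      _ ≤ chainDiff ↥H := by rw [← k2]; omega
      _ = chainDiff ↥(s 0) := by rw [hH0]

end CDAux


/-- for a chain `1 = G_m ◁ G_{m-1} ◁ ⋯ ◁ G_0 = G` with each term
normal in the preceding, `cd(G) ≥ Σᵢ cd(G_{i-1}/G_i)`. -/
theorem chainDiff_ge_sum_of_subnormal_series (G : Type*) [Group G] [Finite G]
    (m : ℕ) (s : Fin (m + 1) → Subgroup G)
    (h0 : s 0 = ⊤) (hlast : s (Fin.last m) = ⊥)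
    (hle : ∀ i : Fin m, s i.succ ≤ s i.castSucc)
    (hnorm : ∀ i : Fin m, ((s i.succ).subgroupOf (s i.castSucc)).Normal) :
    ∑ i : Fin m,
        chainDiff ((s i.castSucc) ⧸ (s i.succ).subgroupOf (s i.castSucc)) ≤
      chainDiff G := by
  have h := CDAux.main_aux m s hlast hle hnorm
  rw [h0] at h
  rwa [CDAux.chainDiff_congr Subgroup.topEquiv] at h
end

section
/- If G = G_1 × G_2 × ... × G_m is a direct product of finite groups, then the chain difference of G is at least the sum of the chain differences of the factors: cd(G) ≥ Σ_i cd(G_i). -/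
section Aux

variable {G : Type*} [Group G]

/-- ℕ-indexed version of an unrefinable chain. -/
def NatChain (t : ℕ) (f : ℕ → Subgroup G) : Prop :=
  f 0 = ⊥ ∧ f t = ⊤ ∧ ∀ i < t, f i ⋖ f (i + 1)

lemma natChain_iff (t : ℕ) :
    (∃ s : Fin (t + 1) → Subgroup G, IsUnrefinableChain s) ↔ ∃ f : ℕ → Subgroup G, NatChain t f := by
  constructor
  · rintro ⟨s, h0, hlast, hstep⟩
    refine ⟨fun n => s ⟨min n t, by omega⟩, ?_, ?_, ?_⟩
    · simpa using h0
    · convert hlast using 2; simp [Fin.ext_iff]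
    · intro i hi
      have := hstep ⟨i, hi⟩
      have h1 : (⟨min i t, by omega⟩ : Fin (t + 1)) = (Fin.castSucc ⟨i, hi⟩) := by
        ext; simp [Fin.castSucc]; omega
      have h2 : (⟨min (i + 1) t, by omega⟩ : Fin (t + 1)) = (Fin.succ ⟨i, hi⟩) := by
        ext; simp; omega
      show s ⟨min i t, by omega⟩ ⋖ s ⟨min (i + 1) t, by omega⟩
      rw [h1, h2]; exact this
  · rintro ⟨f, h0, ht, hstep⟩
    refine ⟨fun j => f j.val, h0, ht, fun i => ?_⟩
    exact hstep i.val i.isLt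

end Aux


section Prod

variable {G H : Type*} [Group G] [Group H]

lemma covBy_bot_prod {A B : Subgroup H} (h : A ⋖ B) :
    (⊥ : Subgroup G).prod A ⋖ (⊥ : Subgroup G).prod B := by
  obtain ⟨x, hxB, hxA⟩ := SetLike.exists_of_lt h.lt
  refine ⟨⟨Subgroup.prod_mono le_rfl h.lt.le, fun hle => hxA ?_⟩, fun M hAM hMB => ?_⟩
  · have : ((1 : G), x) ∈ (⊥ : Subgroup G).prod A := hle (Subgroup.mem_prod.2 ⟨rfl, hxB⟩)
    exact (Subgroup.mem_prod.1 this).2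
  · -- M = ⊥.prod A' where A' = M.map snd
    set A' := M.map (MonoidHom.snd G H) with hA'
    have hM : M = (⊥ : Subgroup G).prod A' := by
      apply le_antisymm
      · intro m hm
        have h1 : m.1 = 1 := (Subgroup.mem_prod.1 (hMB.le hm)).1
        exact Subgroup.mem_prod.2 ⟨h1, ⟨m, hm, rfl⟩⟩
      · rintro ⟨g, y⟩ hgy
        obtain ⟨hg, m, hm, hmy⟩ := Subgroup.mem_prod.1 hgy
        have h1 : m.1 = 1 := (Subgroup.mem_prod.1 (hMB.le hm)).1
        have : ((g, y) : G × H) = m := by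
          simp only [Subgroup.mem_bot] at hg
          exact Prod.ext (hg.trans h1.symm) hmy.symm
        exact this ▸ hm
    have hAA' : A < A' := by
      constructor
      · intro y hy
        have : ((1 : G), y) ∈ M := hAM.le (Subgroup.mem_prod.2 ⟨rfl, hy⟩)
        exact ⟨(1, y), this, rfl⟩
      · intro hle
        exact hAM.ne' (le_antisymm hAM.le (hM ▸ Subgroup.prod_mono le_rfl hle)).symm
    have hA'B : A' < B := by
      constructor
      · rintro y ⟨m, hm, rfl⟩
        exact (Subgroup.mem_prod.1 (hMB.le hm)).2
      · intro hle
        exact hMB.ne (le_antisymm hMB.le (hM ▸ Subgroup.prod_mono le_rfl hle) :)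
    exact h.2 hAA' hA'B

lemma covBy_prod_top {A B : Subgroup G} (h : A ⋖ B) :
    A.prod (⊤ : Subgroup H) ⋖ B.prod (⊤ : Subgroup H) := by
  obtain ⟨x, hxB, hxA⟩ := SetLike.exists_of_lt h.lt
  refine ⟨⟨Subgroup.prod_mono h.lt.le le_rfl, fun hle => hxA ?_⟩, fun M hAM hMB => ?_⟩
  · have : ((x, (1 : H))) ∈ A.prod (⊤ : Subgroup H) := hle (Subgroup.mem_prod.2 ⟨hxB, trivial⟩)
    exact (Subgroup.mem_prod.1 this).1
  · set A' := M.map (MonoidHom.fst G H) with hA'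
    have hM : M = A'.prod (⊤ : Subgroup H) := by
      apply le_antisymm
      · intro m hm
        exact Subgroup.mem_prod.2 ⟨⟨m, hm, rfl⟩, trivial⟩
      · rintro ⟨g, y⟩ hgy
        obtain ⟨⟨m, hm, hmg⟩, -⟩ := Subgroup.mem_prod.1 hgy
        have hmA : ((1 : G), y * m.2⁻¹) ∈ M :=
          hAM.le (Subgroup.mem_prod.2 ⟨A.one_mem, trivial⟩)
        have : ((1 : G), y * m.2⁻¹) * m = (g, y) := by
          have : m.1 = g := hmg
          ext <;> simp [this]
        exact this ▸ M.mul_mem hmA hm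
    have hAA' : A < A' := by
      constructor
      · intro g hg
        have : ((g, (1 : H))) ∈ M := hAM.le (Subgroup.mem_prod.2 ⟨hg, trivial⟩)
        exact ⟨(g, 1), this, rfl⟩
      · intro hle
        exact hAM.ne' (le_antisymm hAM.le (hM ▸ Subgroup.prod_mono hle le_rfl)).symm
    have hA'B : A' < B := by
      constructor
      · rintro g ⟨m, hm, rfl⟩
        exact (Subgroup.mem_prod.1 (hMB.le hm)).1
      · intro hle
        exact hMB.ne (le_antisymm hMB.le (hM ▸ Subgroup.prod_mono hle le_rfl) :)
    exact h.2 hAA' hA'B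

end Prod

section Concat

variable {G H : Type*} [Group G] [Group H]

lemma natChain_prod {a b : ℕ} {f : ℕ → Subgroup G} {g : ℕ → Subgroup H}
    (hf : NatChain a f) (hg : NatChain b g) :
    ∃ F : ℕ → Subgroup (G × H), NatChain (b + a) F := by
  obtain ⟨hf0, hfa, hfs⟩ := hf
  obtain ⟨hg0, hgb, hgs⟩ := hg
  refine ⟨fun n => if n ≤ b then (⊥ : Subgroup G).prod (g n) else (f (n - b)).prod ⊤, ?_, ?_, ?_⟩
  · simp [hg0, Subgroup.bot_prod_bot]
  · rcases Nat.eq_zero_or_pos a with ha | ha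
    · have hbot : (⊥ : Subgroup G) = ⊤ := by
        rw [← hf0]; rw [ha] at hfa; exact hfa
      simp [ha, hgb, hbot]
    · have : ¬ (b + a ≤ b) := by omega
      simp [this, hfa]
  · intro i hi
    rcases lt_or_ge i b with hib | hib
    · have h1 : i ≤ b := hib.le
      have h2 : i + 1 ≤ b := hib
      simp only [h1, h2, if_pos]
      exact covBy_bot_prod (hgs i hib)
    · have h2 : ¬ (i + 1 ≤ b) := by omega
      have key : (if i ≤ b then (⊥ : Subgroup G).prod (g i) else (f (i - b)).prod ⊤)
          = (f (i - b)).prod ⊤ := by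
        rcases Nat.eq_or_lt_of_le hib with rfl | hlt
        · simp [Nat.sub_self, hf0, hgb]
        · simp [Nat.not_le.2 hlt]
      simp only [key, h2, if_neg, not_false_iff]
      have : i + 1 - b = (i - b) + 1 := by omega
      rw [this]
      exact covBy_prod_top (hfs (i - b) (by omega))

lemma natChain_mulEquiv {t : ℕ} {f : ℕ → Subgroup G} (e : G ≃* H) (h : NatChain t f) :
    ∃ F : ℕ → Subgroup H, NatChain t F := by
  obtain ⟨h0, ht, hs⟩ := h
  refine ⟨fun n => (MulEquiv.mapSubgroup e) (f n), ?_, ?_, fun i hi => ?_⟩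
  · show (MulEquiv.mapSubgroup e) (f 0) = ⊥
    rw [h0]; exact (MulEquiv.mapSubgroup e).map_bot
  · show (MulEquiv.mapSubgroup e) (f t) = ⊤
    rw [ht]; exact (MulEquiv.mapSubgroup e).map_top
  · exact (apply_covBy_apply_iff (MulEquiv.mapSubgroup e)).2 (hs i hi)

end Concat

section Exists

variable {G : Type*} [Group G] [Finite G]

lemma exists_chain_to (H : Subgroup G) :
    ∃ (t : ℕ) (f : ℕ → Subgroup G), f 0 = ⊥ ∧ f t = H ∧ ∀ i < t, f i ⋖ f (i + 1) := by
  have : ∀ n (H : Subgroup G), Nat.card H = n →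
      ∃ (t : ℕ) (f : ℕ → Subgroup G), f 0 = ⊥ ∧ f t = H ∧ ∀ i < t, f i ⋖ f (i + 1) := by
    intro n
    induction n using Nat.strong_induction_on with
    | _ n ih =>
      intro H hcard
      rcases eq_or_ne H ⊥ with rfl | hne
      · exact ⟨0, fun _ => ⊥, rfl, rfl, fun i hi => absurd hi (Nat.not_lt_zero i)⟩
      · -- find a maximal proper subgroup K of H
        have hfin : ({K : Subgroup G | K < H}).Finite := Set.toFinite _
        have hnon : ({K : Subgroup G | K < H}).Nonempty := ⟨⊥, bot_lt_iff_ne_bot.2 hne⟩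
        obtain ⟨K, hKmem, hKmax⟩ := hfin.exists_maximalFor id _ hnon
        have hcov : K ⋖ H := by
          refine ⟨hKmem, fun L hKL hLH => ?_⟩
          exact hKL.ne (le_antisymm hKL.le (hKmax hLH hKL.le))
        have hlt : Nat.card K < Nat.card H := by
          have hKltH : K < H := hKmem
          have hsub : (K : Set G) ⊂ (H : Set G) := by
            refine ⟨hKltH.le, fun hc => hKltH.ne ?_⟩
            exact le_antisymm hKltH.le hc
          have := Set.ncard_lt_ncard hsub (Set.toFinite _)
          rw [← Nat.card_coe_set_eq, ← Nat.card_coe_set_eq] at this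
          exact this
        obtain ⟨t, f, hf0, hft, hfs⟩ := ih (Nat.card K) (hcard ▸ hlt) K rfl
        refine ⟨t + 1, fun n => if n ≤ t then f n else H, by simp [hf0], by simp, ?_⟩
        intro i hi
        rcases lt_or_ge i t with h | h
        · have h1 : i ≤ t := h.le
          have h2 : i + 1 ≤ t := h
          simpa [h1, h2] using hfs i h
        · have : i = t := by omega
          subst this
          simpa [hft] using hcov
  exact this (Nat.card H) H rfl

lemma exists_natChain : ∃ (t : ℕ) (f : ℕ → Subgroup G), NatChain t f := by
  obtain ⟨t, f, h0, ht, hs⟩ := exists_chain_to (⊤ : Subgroup G)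
  exact ⟨t, f, h0, ht, hs⟩

lemma chainSet_bddAbove :
    BddAbove {t | ∃ s : Fin (t + 1) → Subgroup G, IsUnrefinableChain s} := by
  refine ⟨Nat.card (Subgroup G), fun t ht => ?_⟩
  obtain ⟨s, h0, hlast, hstep⟩ := ht
  have hmono : StrictMono s := Fin.strictMono_iff_lt_succ.2 fun i => (hstep i).lt
  have h := Nat.card_le_card_of_injective s hmono.injective
  simp only [Nat.card_eq_fintype_card, Fintype.card_fin] at h
  omega
end Exists

section Pi

/-- `MulEquiv` splitting off the first factor of a finite product of groups. -/
def mulEquivPiFinSucc {m : ℕ} (G : Fin (m + 1) → Type*) [∀ i, Group (G i)] :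
    (∀ i, G i) ≃* G 0 × ∀ i : Fin m, G i.succ where
  toFun f := (f 0, fun i => f i.succ)
  invFun p := Fin.cons p.1 p.2
  left_inv f := by
    funext i
    refine Fin.cases ?_ (fun j => ?_) i
    · simp
    · simp
  right_inv p := by
    refine Prod.ext ?_ ?_
    · simp
    · funext j; simp
  map_mul' x y := rfl

lemma natChain_pi : ∀ (m : ℕ) (G : Fin m → Type u) (_ : ∀ i, Group (G i)) (t : Fin m → ℕ),
    (∀ i, ∃ f : ℕ → Subgroup (G i), NatChain (t i) f) →
    ∃ F : ℕ → Subgroup (∀ i, G i), NatChain (∑ i, t i) F := by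
  intro m
  induction m with
  | zero =>
    intro G _ t _
    refine ⟨fun _ => ⊥, rfl, ?_, fun i hi => absurd hi (by simp)⟩
    have : (⊥ : Subgroup (∀ i, G i)) = ⊤ := by
      apply le_antisymm bot_le
      intro x _
      have : x = 1 := Subsingleton.elim x 1
      simp [this]
    simp [this]
  | succ n ih =>
    intro G _ t h
    obtain ⟨F1, hF1⟩ := ih (fun i => G i.succ) (fun i => inferInstance) (fun i => t i.succ)
      (fun i => h i.succ)
    obtain ⟨f0, hf0⟩ := h 0
    obtain ⟨F, hF⟩ := natChain_prod hf0 hF1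
    obtain ⟨F', hF'⟩ := natChain_mulEquiv (mulEquivPiFinSucc G).symm hF
    rw [Fin.sum_univ_succ, Nat.add_comm (t 0)]
    exact ⟨F', hF'⟩

end Pi

section LengthDepth

variable {G : Type*} [Group G] [Finite G]

lemma chainSet_nonempty :
    Set.Nonempty {t | ∃ s : Fin (t + 1) → Subgroup G, IsUnrefinableChain s} := by
  obtain ⟨t, f, hf⟩ := exists_natChain (G := G)
  exact ⟨t, (natChain_iff t).2 ⟨f, hf⟩⟩

lemma le_groupLength {t : ℕ} {f : ℕ → Subgroup G} (h : NatChain t f) : t ≤ groupLength G :=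
  le_csSup chainSet_bddAbove ((natChain_iff t).2 ⟨f, h⟩)

lemma groupDepth_le {t : ℕ} {f : ℕ → Subgroup G} (h : NatChain t f) : groupDepth G ≤ t :=
  Nat.sInf_le ((natChain_iff t).2 ⟨f, h⟩)

lemma exists_natChain_length : ∃ f : ℕ → Subgroup G, NatChain (groupLength G) f :=
  (natChain_iff _).1 (Nat.sSup_mem chainSet_nonempty chainSet_bddAbove)

lemma exists_natChain_depth : ∃ f : ℕ → Subgroup G, NatChain (groupDepth G) f :=
  (natChain_iff _).1 (Nat.sInf_mem chainSet_nonempty)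

lemma groupDepth_le_groupLength : groupDepth G ≤ groupLength G := by
  obtain ⟨f, hf⟩ := exists_natChain_length (G := G)
  exact groupDepth_le hf

end LengthDepth


/-- `cd(G₁ × ⋯ × G_m) ≥ Σᵢ cd(Gᵢ)`. -/
theorem chainDiff_pi_ge_sum (m : ℕ) (G : Fin m → Type*)
    [∀ i, Group (G i)] [∀ i, Finite (G i)] :
    ∑ i : Fin m, chainDiff (G i) ≤ chainDiff (∀ i, G i) := by
  have hlen : ∑ i, groupLength (G i) ≤ groupLength (∀ i, G i) := by
    obtain ⟨F, hF⟩ := natChain_pi m G (fun i => inferInstance) (fun i => groupLength (G i))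
      (fun i => exists_natChain_length)
    exact le_groupLength hF
  have hdep : groupDepth (∀ i, G i) ≤ ∑ i, groupDepth (G i) := by
    obtain ⟨F, hF⟩ := natChain_pi m G (fun i => inferInstance) (fun i => groupDepth (G i))
      (fun i => exists_natChain_depth)
    exact groupDepth_le hF
  have hsum : ∑ i, groupLength (G i) =
      ∑ i, groupDepth (G i) + ∑ i, (groupLength (G i) - groupDepth (G i)) := by
    rw [← Finset.sum_add_distrib]
    refine Finset.sum_congr rfl fun i _ => ?_
    have := groupDepth_le_groupLength (G := G i)
    omega
  unfold chainDiff
  omega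
end
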